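/- Let n ≥ 1 and let μ_1, …, μ_n satisfy 0 < μ_1 ≤ μ_2 ≤ … ≤ μ_n. Let D be the first canonical form matrix of μ and let π be a probability vector with π_1 > 0 such that (π, D) represents the unit exponential distribution. Then μ_1 = 1. -/

import Mathlib

open Matrix

/-- The first canonical form matrix of rates `μ`: diagonal `-μ i`, superdiagonal `μ i`. -/
def canonD {n : ℕ} (μ : Fin n → ℝ) : Matrix (Fin n) (Fin n) ℝ :=
  Matrix.of fun i j => if j = i then -μ i else if (j : ℕ) = (i : ℕ) + 1 then μ i else 0

/-- `(π, D)` represents the unit exponential distribution: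
`π · exp(tD) · 𝟙 = e^{-t}` for all `t ≥ 0`. -/
def ReprUnitExp {n : ℕ} (π : Fin n → ℝ) (D : Matrix (Fin n) (Fin n) ℝ) : Prop :=
  ∀ t : ℝ, 0 ≤ t → (π ᵥ* NormedSpace.exp (t • D)) ⬝ᵥ (fun _ => 1) = Real.exp (-t)

lemma exp_entry_hasSum {n : ℕ} (M : Matrix (Fin n) (Fin n) ℝ) (i j : Fin n) :
    HasSum (fun k : ℕ => (k.factorial : ℝ)⁻¹ * (M ^ k) i j)
      (NormedSpace.exp M i j) := by
  letI : SeminormedRing (Matrix (Fin n) (Fin n) ℝ) := Matrix.linftyOpSemiNormedRing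
  letI : NormedRing (Matrix (Fin n) (Fin n) ℝ) := Matrix.linftyOpNormedRing
  letI : NormedAlgebra ℝ (Matrix (Fin n) (Fin n) ℝ) := Matrix.linftyOpNormedAlgebra
  have hb : ∀ A : Matrix (Fin n) (Fin n) ℝ, ‖A i j‖ ≤ 1 * ‖A‖ := by
    intro A
    rw [one_mul]
    have h1 : ‖A i j‖₊ ≤ ‖A‖₊ := by
      rw [Matrix.linfty_opNNNorm_def]
      exact le_trans
        (Finset.single_le_sum (f := fun j' => ‖A i j'‖₊) (fun _ _ => zero_le)
          (Finset.mem_univ j))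
        (Finset.le_sup (f := fun i => ∑ j : Fin n, ‖A i j‖₊) (Finset.mem_univ i))
    exact_mod_cast h1
  let L : Matrix (Fin n) (Fin n) ℝ →L[ℝ] ℝ :=
    LinearMap.mkContinuous
      { toFun := fun A => A i j
        map_add' := fun _ _ => rfl
        map_smul' := fun _ _ => rfl } 1 hb
  have h0 : HasSum (fun k : ℕ => (k.factorial : ℝ)⁻¹ • M ^ k)
      (NormedSpace.exp M) := by
    rw [NormedSpace.exp_eq_tsum (𝕂 := ℝ)]
    exact (NormedSpace.expSeries_summable' M).hasSum
  have := L.hasSum h0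
  exact this

lemma pow_entry_nonneg {n : ℕ} {A : Matrix (Fin n) (Fin n) ℝ}
    (hA : ∀ i j, 0 ≤ A i j) (k : ℕ) : ∀ i j, 0 ≤ (A ^ k) i j := by
  induction k with
  | zero => intro i j; simp [Matrix.one_apply]; positivity
  | succ k ih =>
    intro i j
    rw [pow_succ, Matrix.mul_apply]
    exact Finset.sum_nonneg fun m _ => mul_nonneg (ih i m) (hA m j)

lemma pow_entry_le {n : ℕ} {A B : Matrix (Fin n) (Fin n) ℝ}
    (hA : ∀ i j, 0 ≤ A i j) (hAB : ∀ i j, A i j ≤ B i j) (k : ℕ) :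
    ∀ i j, (A ^ k) i j ≤ (B ^ k) i j := by
  induction k with
  | zero => intro i j; simp
  | succ k ih =>
    intro i j
    rw [pow_succ, pow_succ, Matrix.mul_apply, Matrix.mul_apply]
    refine Finset.sum_le_sum fun m _ => ?_
    exact mul_le_mul (ih i m) (hAB m j) (hA m j) (pow_entry_nonneg (fun i j => (hA i j).trans (hAB i j)) k i m)

/-- The nilpotent shift matrix. -/
def shiftN (n : ℕ) : Matrix (Fin n) (Fin n) ℝ :=
  Matrix.of fun i j => if (j : ℕ) = (i : ℕ) + 1 then 1 else 0

lemma shiftN_pow (n k : ℕ) :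
    (shiftN n) ^ k = Matrix.of fun (i j : Fin n) => if (j : ℕ) = (i : ℕ) + k then 1 else 0 := by
  induction k with
  | zero =>
    ext i j
    simp [Matrix.one_apply, Fin.ext_iff, eq_comm]
  | succ k ih =>
    ext i j
    rw [pow_succ, ih, Matrix.mul_apply]
    by_cases hj : (j : ℕ) = (i : ℕ) + k + 1
    · have hlt : (i : ℕ) + k < n := by omega
      rw [Finset.sum_eq_single (⟨(i : ℕ) + k, hlt⟩ : Fin n)]
      · simp only [Matrix.of_apply, shiftN]
        rw [if_pos (by omega : (j:ℕ) = ↑i + (k+1))]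
        simp [hj]
      · intro m _ hm
        have : (m : ℕ) ≠ (i : ℕ) + k := fun h => hm (Fin.ext h)
        simp [shiftN, this]
      · simp
    · rw [Finset.sum_eq_zero, Matrix.of_apply, if_neg (by omega : ¬ (j:ℕ) = ↑i + (k+1))]
      intro m _
      by_cases h1 : (m : ℕ) = (i : ℕ) + k
      · have : (j : ℕ) ≠ (m : ℕ) + 1 := by omega
        simp [shiftN, this]
      · simp [h1]

lemma exp_shift {n : ℕ} (A : Matrix (Fin n) (Fin n) ℝ) (c : ℝ) :
    NormedSpace.exp A = Real.exp (-c) • NormedSpace.exp (A + c • 1) := by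
  have hcomm : Commute ((-c) • (1 : Matrix (Fin n) (Fin n) ℝ)) (A + c • 1) := by
    exact (Commute.one_left _).smul_left _
  have hA : A = (-c) • (1 : Matrix (Fin n) (Fin n) ℝ) + (A + c • 1) := by
    rw [neg_smul]; abel
  conv_lhs => rw [hA]
  rw [Matrix.exp_add_of_commute _ _ hcomm]
  have h1 : ((-c) • (1 : Matrix (Fin n) (Fin n) ℝ)) = Matrix.diagonal (fun _ => -c) := by
    ext i j
    simp only [Matrix.smul_apply, Matrix.one_apply, Matrix.diagonal_apply]
    split <;> simp
  rw [h1, Matrix.exp_diagonal]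
  have h2 : NormedSpace.exp (fun _ : Fin n => -c) = fun _ : Fin n => Real.exp (-c) := by
    funext x
    rw [Pi.coe_exp, Real.exp_eq_exp_ℝ]
  rw [h2, ← Matrix.smul_eq_diagonal_mul]

lemma exp_entry_nonneg {n : ℕ} {A : Matrix (Fin n) (Fin n) ℝ} (c : ℝ)
    (h : ∀ i j, 0 ≤ (A + c • 1) i j) (i j : Fin n) :
    0 ≤ NormedSpace.exp A i j := by
  rw [exp_shift A c, Matrix.smul_apply, smul_eq_mul]
  refine mul_nonneg (Real.exp_pos _).le ?_
  refine hasSum_le (fun k => ?_) hasSum_zero (exp_entry_hasSum (A + c • 1) i j)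
  exact mul_nonneg (by positivity) (pow_entry_nonneg h k i j)

lemma exp_entry_le {n : ℕ} {A B : Matrix (Fin n) (Fin n) ℝ} (c : ℝ)
    (hA : ∀ i j, 0 ≤ (A + c • 1) i j) (hAB : ∀ i j, A i j ≤ B i j) (i j : Fin n) :
    NormedSpace.exp A i j ≤ NormedSpace.exp B i j := by
  rw [exp_shift A c, exp_shift B c, Matrix.smul_apply, Matrix.smul_apply,
    smul_eq_mul, smul_eq_mul]
  refine mul_le_mul_of_nonneg_left ?_ (Real.exp_pos _).le
  have hAB' : ∀ i j, (A + c • 1) i j ≤ (B + c • 1) i j := by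
    intro i j
    simp only [Matrix.add_apply]
    exact add_le_add_left (hAB i j) _
  refine hasSum_le (fun k => ?_) (exp_entry_hasSum (A + c • 1) i j)
    (exp_entry_hasSum (B + c • 1) i j)
  exact mul_le_mul_of_nonneg_left (pow_entry_le hA hAB' k i j) (by positivity)

lemma hasSum_real_exp (x : ℝ) :
    HasSum (fun k : ℕ => (k.factorial : ℝ)⁻¹ * x ^ k) (Real.exp x) := by
  rw [Real.exp_eq_exp_ℝ, NormedSpace.exp_eq_tsum (𝕂 := ℝ)]
  have hs := (NormedSpace.expSeries_summable' (𝕂 := ℝ) (𝔸 := ℝ) x)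
  simpa [smul_eq_mul] using hs.hasSum

lemma canonD_pow_col0 {n : ℕ} (hn : 0 < n) (μ : Fin n → ℝ) (k : ℕ) (i : Fin n) :
    ((canonD μ) ^ k) i ⟨0, hn⟩ = if i = ⟨0, hn⟩ then (-μ ⟨0, hn⟩) ^ k else 0 := by
  set i0 : Fin n := ⟨0, hn⟩ with hi0
  have hcol : ∀ m : Fin n, canonD μ m i0 = if m = i0 then -μ i0 else 0 := by
    intro m
    simp only [canonD, Matrix.of_apply]
    by_cases h : m = i0
    · subst h; simp
    · rw [if_neg (fun h' => h h'.symm), if_neg (by simp [hi0]), if_neg h]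
  induction k with
  | zero => simp [Matrix.one_apply]
  | succ k ih =>
    rw [pow_succ, Matrix.mul_apply, Finset.sum_eq_single i0]
    · rw [ih, hcol, if_pos rfl]
      by_cases h : i = i0 <;> simp [h, pow_succ]
    · intro m _ hm
      rw [hcol, if_neg hm, mul_zero]
    · simp

lemma exp_canonD_00 {n : ℕ} (hn : 0 < n) (μ : Fin n → ℝ) (t : ℝ) :
    NormedSpace.exp (t • canonD μ) ⟨0, hn⟩ ⟨0, hn⟩ = Real.exp (-(t * μ ⟨0, hn⟩)) := by
  have h1 := exp_entry_hasSum (t • canonD μ) ⟨0, hn⟩ ⟨0, hn⟩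
  have h2 : ∀ k : ℕ, (k.factorial : ℝ)⁻¹ * ((t • canonD μ) ^ k) ⟨0, hn⟩ ⟨0, hn⟩
      = (k.factorial : ℝ)⁻¹ * (-(t * μ ⟨0, hn⟩)) ^ k := by
    intro k
    rw [smul_pow, Matrix.smul_apply, canonD_pow_col0 hn μ k, if_pos rfl, smul_eq_mul,
      ← mul_pow]
    ring_nf
  rw [funext h2] at h1
  exact h1.unique (hasSum_real_exp _)

lemma exp_smul_shiftN_le {n : ℕ} (s : ℝ) (hs : 0 ≤ s) (i j : Fin n) :
    NormedSpace.exp (s • shiftN n) i j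
      ≤ ∑ k ∈ Finset.range n, (k.factorial : ℝ)⁻¹ * s ^ k := by
  have h1 := exp_entry_hasSum (s • shiftN n) i j
  have h2 : ∀ k : ℕ, (k.factorial : ℝ)⁻¹ * ((s • shiftN n) ^ k) i j
      = (k.factorial : ℝ)⁻¹ * s ^ k * (if (j : ℕ) = (i : ℕ) + k then 1 else 0) := by
    intro k
    rw [smul_pow, Matrix.smul_apply, shiftN_pow, smul_eq_mul, Matrix.of_apply]
    ring
  rw [funext h2] at h1
  have h3 : ∀ k ∉ Finset.range n,
      (k.factorial : ℝ)⁻¹ * s ^ k * (if (j : ℕ) = (i : ℕ) + k then 1 else 0) = 0 := by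
    intro k hk
    rw [Finset.mem_range, not_lt] at hk
    rw [if_neg (by omega : ¬ (j : ℕ) = (i : ℕ) + k), mul_zero]
  rw [h1.unique (hasSum_sum_of_ne_finset_zero h3)]
  refine Finset.sum_le_sum fun k _ => ?_
  have : (0:ℝ) ≤ (k.factorial : ℝ)⁻¹ * s ^ k := by positivity
  split <;> nlinarith

lemma aux_tendsto (k : ℕ) {c : ℝ} (hc : 0 < c) :
    Filter.Tendsto (fun t : ℝ => t ^ k * Real.exp (-(c * t))) Filter.atTop (nhds 0) := by
  have h1 : Filter.Tendsto (fun t : ℝ => c * t) Filter.atTop Filter.atTop :=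
    (Filter.tendsto_id (α := ℝ)).const_mul_atTop hc
  have h2 := (Real.tendsto_pow_mul_exp_neg_atTop_nhds_zero k).comp h1
  have h3 := h2.const_mul ((c ^ k)⁻¹)
  rw [mul_zero] at h3
  refine h3.congr fun t => ?_
  simp only [Function.comp_apply, mul_pow]
  field_simp
theorem stmt0 {n : ℕ} (hn : 0 < n) (μ : Fin n → ℝ) (hpos : ∀ i, 0 < μ i)
    (hmono : Monotone μ) (π : Fin n → ℝ) (hnonneg : ∀ i, 0 ≤ π i)
    (hsum : ∑ i, π i = 1) (hπ1 : 0 < π ⟨0, hn⟩)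
    (hrep : ReprUnitExp π (canonD μ)) :
    μ ⟨0, hn⟩ = 1 := by
  have i0 : Fin n := ⟨0, hn⟩
  set itop : Fin n := ⟨n - 1, by omega⟩ with hitop
  set μ1 : ℝ := μ ⟨0, hn⟩ with hμ1
  set μt : ℝ := μ itop with hμt
  have hμle : ∀ i : Fin n, μ i ≤ μt := by
    intro i
    refine hmono (Fin.le_def.mpr ?_)
    have := i.isLt
    simp only [hitop]
    omega
  have hμ1le : ∀ i : Fin n, μ1 ≤ μ i := fun i => hmono (Fin.le_def.mpr (Nat.zero_le _))
  set E : Matrix (Fin n) (Fin n) ℝ := (-μ1) • 1 + μt • shiftN n with hE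
  set P : ℝ → ℝ := fun s => ∑ k ∈ Finset.range n, (k.factorial : ℝ)⁻¹ * s ^ k with hP
  -- expansion of the representation identity
  have hfexp : ∀ t : ℝ, 0 ≤ t →
      ∑ j, ∑ i, π i * NormedSpace.exp (t • canonD μ) i j = Real.exp (-t) := by
    intro t ht
    have h := hrep t ht
    simpa [dotProduct, Matrix.vecMul, mul_one] using h
  -- entrywise nonnegativity of the shifted generator
  have hshiftnn : ∀ t : ℝ, 0 ≤ t → ∀ i j : Fin n,
      0 ≤ (t • canonD μ + (t * μt) • 1) i j := by
    intro t ht i j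
    simp only [Matrix.add_apply, Matrix.smul_apply, Matrix.one_apply, smul_eq_mul,
      canonD, Matrix.of_apply]
    by_cases h1 : j = i
    · subst h1
      rw [if_pos rfl, if_pos rfl, mul_one]
      nlinarith [mul_nonneg ht (sub_nonneg.mpr (hμle j))]
    · rw [if_neg h1, if_neg (show ¬ i = j from fun h => h1 h.symm), mul_zero, add_zero]
      by_cases h2 : (j : ℕ) = (i : ℕ) + 1
      · rw [if_pos h2]
        exact mul_nonneg ht (hpos i).le
      · rw [if_neg h2, mul_zero]
  have hexpnn : ∀ t : ℝ, 0 ≤ t → ∀ i j : Fin n,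
      0 ≤ NormedSpace.exp (t • canonD μ) i j := by
    intro t ht i j
    exact exp_entry_nonneg (t * μt) (hshiftnn t ht) i j
  -- entrywise comparison D ≤ E
  have hDE0 : ∀ i j : Fin n, canonD μ i j ≤ E i j := by
    intro i j
    simp only [hE, Matrix.add_apply, Matrix.smul_apply, Matrix.one_apply, smul_eq_mul,
      canonD, Matrix.of_apply, shiftN]
    by_cases h1 : j = i
    · subst h1
      rw [if_pos rfl, if_pos rfl, if_neg (by omega : ¬ (j : ℕ) = (j : ℕ) + 1),
        mul_one, mul_zero, add_zero]
      have := hμ1le j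
      linarith
    · rw [if_neg h1, if_neg (show ¬ i = j from fun h => h1 h.symm), mul_zero, zero_add]
      by_cases h2 : (j : ℕ) = (i : ℕ) + 1
      · rw [if_pos h2, if_pos h2, mul_one]
        exact hμle i
      · rw [if_neg h2, if_neg h2, mul_zero]
  have hDE : ∀ t : ℝ, 0 ≤ t → ∀ i j : Fin n,
      (t • canonD μ) i j ≤ (t • E) i j := by
    intro t ht i j
    rw [Matrix.smul_apply, Matrix.smul_apply, smul_eq_mul, smul_eq_mul]
    exact mul_le_mul_of_nonneg_left (hDE0 i j) ht
  have hexpDE : ∀ t : ℝ, 0 ≤ t → ∀ i j : Fin n,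
      NormedSpace.exp (t • canonD μ) i j ≤ NormedSpace.exp (t • E) i j := by
    intro t ht i j
    exact exp_entry_le (t * μt) (hshiftnn t ht) (hDE t ht) i j
  -- exp of t • E
  have hEeq : ∀ t : ℝ, NormedSpace.exp (t • E)
      = Real.exp (-(t * μ1)) • NormedSpace.exp ((t * μt) • shiftN n) := by
    intro t
    have h := exp_shift (t • E) (t * μ1)
    have h2 : t • E + (t * μ1) • (1 : Matrix (Fin n) (Fin n) ℝ) = (t * μt) • shiftN n := by
      rw [hE, smul_add, smul_smul, smul_smul, add_right_comm, ← add_smul]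
      have : t * -μ1 + t * μ1 = 0 := by ring
      rw [this, zero_smul, zero_add]
    rw [h2] at h
    exact h
  -- entrywise upper bound for exp (t • D)
  have hentry_up : ∀ t : ℝ, 0 ≤ t → ∀ i j : Fin n,
      NormedSpace.exp (t • canonD μ) i j ≤ Real.exp (-(t * μ1)) * P (t * μt) := by
    intro t ht i j
    refine (hexpDE t ht i j).trans ?_
    rw [hEeq t, Matrix.smul_apply, smul_eq_mul]
    exact mul_le_mul_of_nonneg_left
      (exp_smul_shiftN_le (t * μt) (mul_nonneg ht (hpos itop).le) i j) (Real.exp_pos _).le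
  -- global upper bound
  have hup : ∀ t : ℝ, 0 ≤ t →
      Real.exp (-t) ≤ (n : ℝ) * (Real.exp (-(t * μ1)) * P (t * μt)) := by
    intro t ht
    rw [← hfexp t ht]
    calc ∑ j, ∑ i, π i * NormedSpace.exp (t • canonD μ) i j
        ≤ ∑ j : Fin n, ∑ i, π i * (Real.exp (-(t * μ1)) * P (t * μt)) := by
          refine Finset.sum_le_sum fun j _ => Finset.sum_le_sum fun i _ => ?_
          exact mul_le_mul_of_nonneg_left (hentry_up t ht i j) (hnonneg i)
      _ = ∑ j : Fin n, Real.exp (-(t * μ1)) * P (t * μt) := by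
          refine Finset.sum_congr rfl fun j _ => ?_
          rw [← Finset.sum_mul, hsum, one_mul]
      _ = (n : ℝ) * (Real.exp (-(t * μ1)) * P (t * μt)) := by
          rw [Finset.sum_const, Finset.card_univ, Fintype.card_fin, nsmul_eq_mul]
  -- global lower bound
  have hlow : ∀ t : ℝ, 0 ≤ t →
      π ⟨0, hn⟩ * Real.exp (-(t * μ1)) ≤ Real.exp (-t) := by
    intro t ht
    rw [← hfexp t ht, hμ1, ← exp_canonD_00 hn μ t]
    calc π ⟨0, hn⟩ * NormedSpace.exp (t • canonD μ) ⟨0, hn⟩ ⟨0, hn⟩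
        ≤ ∑ i, π i * NormedSpace.exp (t • canonD μ) i ⟨0, hn⟩ :=
          Finset.single_le_sum
            (fun i _ => mul_nonneg (hnonneg i) (hexpnn t ht i ⟨0, hn⟩))
            (Finset.mem_univ (⟨0, hn⟩ : Fin n))
      _ ≤ ∑ j, ∑ i, π i * NormedSpace.exp (t • canonD μ) i j :=
          Finset.single_le_sum
            (fun j _ => Finset.sum_nonneg fun i _ =>
              mul_nonneg (hnonneg i) (hexpnn t ht i j))
            (Finset.mem_univ (⟨0, hn⟩ : Fin n))
  -- first direction: 1 ≤ μ1
  have hge : 1 ≤ μ1 := by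
    by_contra hlt
    push_neg at hlt
    set x0 : ℝ := max 0 (1 - Real.log (π ⟨0, hn⟩)) with hx0
    set t0 : ℝ := x0 / (1 - μ1) with ht0
    have hden : 0 < 1 - μ1 := by linarith
    have ht0nn : 0 ≤ t0 := div_nonneg (le_max_left _ _) hden.le
    have hxe : (1 - μ1) * t0 = x0 := by
      rw [ht0]
      field_simp
    have hsplit : Real.exp (-t0) = Real.exp (-(t0 * μ1)) * Real.exp (-x0) := by
      rw [← Real.exp_add]
      congr 1
      nlinarith [hxe]
    have hkey := hlow t0 ht0nn
    rw [hsplit] at hkey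
    have hA : 0 < Real.exp (-(t0 * μ1)) := Real.exp_pos _
    have hπle : π ⟨0, hn⟩ ≤ Real.exp (-x0) := by
      have h := hkey
      rw [mul_comm (π ⟨0, hn⟩) _] at h
      exact le_of_mul_le_mul_left h hA
    have hxlt : Real.exp (-x0) < π ⟨0, hn⟩ := by
      have h1 : -x0 < Real.log (π ⟨0, hn⟩) := by
        have := le_max_right 0 (1 - Real.log (π ⟨0, hn⟩))
        rw [hx0] at *
        nlinarith [le_max_right (0 : ℝ) (1 - Real.log (π ⟨0, hn⟩))]
      calc Real.exp (-x0) < Real.exp (Real.log (π ⟨0, hn⟩)) := Real.exp_lt_exp.mpr h1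
        _ = π ⟨0, hn⟩ := Real.exp_log hπ1
    linarith
  -- second direction: μ1 ≤ 1
  have hle : μ1 ≤ 1 := by
    by_contra hlt
    push_neg at hlt
    have hc : 0 < μ1 - 1 := by linarith
    have hkey : ∀ t : ℝ, 0 ≤ t →
        1 ≤ (n : ℝ) * P (t * μt) * Real.exp (-((μ1 - 1) * t)) := by
      intro t ht
      have h := hup t ht
      have h3 : Real.exp (-(t * μ1)) = Real.exp (-t) * Real.exp (-((μ1 - 1) * t)) := by
        rw [← Real.exp_add]
        congr 1
        ring
      rw [h3] at h
      have hE0 : 0 < Real.exp (-t) := Real.exp_pos _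
      have h4 : Real.exp (-t) * 1
          ≤ Real.exp (-t) * ((n : ℝ) * P (t * μt) * Real.exp (-((μ1 - 1) * t))) := by
        rw [mul_one]
        calc Real.exp (-t) ≤ (n : ℝ) * (Real.exp (-t) * Real.exp (-((μ1 - 1) * t)) * P (t * μt)) := h
          _ = Real.exp (-t) * ((n : ℝ) * P (t * μt) * Real.exp (-((μ1 - 1) * t))) := by ring
      exact le_of_mul_le_mul_left h4 hE0
    have htend : Filter.Tendsto
        (fun t : ℝ => (n : ℝ) * P (t * μt) * Real.exp (-((μ1 - 1) * t)))
        Filter.atTop (nhds 0) := by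
      have heq : (fun t : ℝ => (n : ℝ) * P (t * μt) * Real.exp (-((μ1 - 1) * t)))
          = fun t : ℝ => ∑ k ∈ Finset.range n,
              ((n : ℝ) * ((k.factorial : ℝ)⁻¹ * μt ^ k)) * (t ^ k * Real.exp (-((μ1 - 1) * t))) := by
        funext t
        rw [hP]
        simp only [Finset.sum_mul, Finset.mul_sum]
        refine Finset.sum_congr rfl fun k _ => ?_
        rw [mul_pow]
        ring
      rw [heq]
      have h0 : (0 : ℝ) = ∑ k ∈ Finset.range n, (0 : ℝ) := by simp
      rw [h0]
      refine tendsto_finset_sum _ fun k _ => ?_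
      have := (aux_tendsto k hc).const_mul ((n : ℝ) * ((k.factorial : ℝ)⁻¹ * μt ^ k))
      rw [mul_zero] at this
      exact this
    have hev := htend.eventually_lt_const one_pos
    have := (hev.and (Filter.eventually_ge_atTop (0 : ℝ))).exists
    obtain ⟨t, hlt1, ht0⟩ := this
    exact absurd (hkey t ht0) (not_le.mpr hlt1)
  linarith [hge, hle]
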